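/- For every integer k ≥ 2 and every integer n ≥ 0, the total number of k-noncrossing RNA structures on {1,…,n} satisfies S_k(n) = ∑_{b=0}^{⌊n/2⌋} (−1)^b · binom(n−b, b) · ( ∑_{ℓ=0}^{n−2b} f_k(n−2b, ℓ) ). -/

import Mathlib

/-- The arcs form a partial matching: each arc `(i,j)` satisfies `i < j`
and every vertex lies in at most one arc. -/
def IsMatchingArcs (n : ℕ) (A : Finset (Fin n × Fin n)) : Prop :=
  (∀ p ∈ A, p.1 < p.2) ∧
    ∀ p ∈ A, ∀ q ∈ A, p ≠ q →
      p.1 ≠ q.1 ∧ p.1 ≠ q.2 ∧ p.2 ≠ q.1 ∧ p.2 ≠ q.2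

/-- `A` contains `k` mutually crossing arcs
`(i₁,j₁),…,(i_k,j_k)` with `i₁ < ⋯ < i_k < j₁ < ⋯ < j_k`. -/
def HasKCrossing (k n : ℕ) (A : Finset (Fin n × Fin n)) : Prop :=
  ∃ f : Fin k → Fin n × Fin n,
    (∀ i, f i ∈ A) ∧
      StrictMono (fun i => (f i).1) ∧
        StrictMono (fun i => (f i).2) ∧
          ∀ i j, (f i).1 < (f j).2

/-- A `k`-noncrossing digraph on `{1,…,n}`. -/
def IsKNCDigraph (k n : ℕ) (A : Finset (Fin n × Fin n)) : Prop :=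
  IsMatchingArcs n A ∧ ¬ HasKCrossing k n A

/-- The set of isolated (degree `0`) vertices. -/
def IsolatedSet (n : ℕ) (A : Finset (Fin n × Fin n)) : Finset (Fin n) :=
  Finset.univ.filter fun v => ∀ p ∈ A, p.1 ≠ v ∧ p.2 ≠ v

/-- `A` contains a `1`-arc, i.e. an arc of the form `(i, i+1)`. -/
def HasOneArc (n : ℕ) (A : Finset (Fin n × Fin n)) : Prop :=
  ∃ p ∈ A, (p.2 : ℕ) = (p.1 : ℕ) + 1

/-- A `k`-noncrossing RNA structure on `{1,…,n}`: a `k`-noncrossing digraph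
without `1`-arcs. -/
def IsRNAStructure (k n : ℕ) (A : Finset (Fin n × Fin n)) : Prop :=
  IsKNCDigraph k n A ∧ ¬ HasOneArc n A

/-- `fNC k n l` = number of `k`-noncrossing digraphs on `{1,…,n}` with
exactly `l` isolated vertices. -/
noncomputable def fNC (k n l : ℕ) : ℕ :=
  Nat.card {A : Finset (Fin n × Fin n) // IsKNCDigraph k n A ∧ (IsolatedSet n A).card = l}

/-- `SIso k n l` = number of `k`-noncrossing RNA structures on `{1,…,n}` with
exactly `l` isolated vertices. -/
noncomputable def SIso (k n l : ℕ) : ℕ :=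
  Nat.card {A : Finset (Fin n × Fin n) // IsRNAStructure k n A ∧ (IsolatedSet n A).card = l}

/-- `SArc k n h` = number of `k`-noncrossing RNA structures on `{1,…,n}` with
exactly `h` arcs. -/
noncomputable def SArc (k n h : ℕ) : ℕ :=
  Nat.card {A : Finset (Fin n × Fin n) // IsRNAStructure k n A ∧ A.card = h}

/-- `STot k n` = total number of `k`-noncrossing RNA structures on `{1,…,n}`. -/
noncomputable def STot (k n : ℕ) : ℕ :=
  Nat.card {A : Finset (Fin n × Fin n) // IsRNAStructure k n A}

open Finset
open scoped Classical

private def Vset (n : ℕ) (B : Finset (Fin n × Fin n)) : Finset (Fin n) :=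
  B.image Prod.fst ∪ B.image Prod.snd

private lemma mem_Vset {n : ℕ} {B : Finset (Fin n × Fin n)} {x : Fin n} :
    x ∈ Vset n B ↔ ∃ p ∈ B, p.1 = x ∨ p.2 = x := by
  simp only [Vset, mem_union, mem_image]
  constructor
  · rintro (⟨p, hp, h⟩ | ⟨p, hp, h⟩) <;> exact ⟨p, hp, by tauto⟩
  · rintro ⟨p, hp, (h | h)⟩
    · exact Or.inl ⟨p, hp, h⟩
    · exact Or.inr ⟨p, hp, h⟩

private lemma Vset_card {n : ℕ} {B : Finset (Fin n × Fin n)} (hB : IsMatchingArcs n B) :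
    (Vset n B).card = 2 * B.card := by
  have h1 : (B.image Prod.fst).card = B.card := by
    apply Finset.card_image_of_injOn
    intro p hp q hq h
    by_contra hne
    exact (hB.2 p hp q hq hne).1 h
  have h2 : (B.image Prod.snd).card = B.card := by
    apply Finset.card_image_of_injOn
    intro p hp q hq h
    by_contra hne
    exact (hB.2 p hp q hq hne).2.2.2 h
  have hdisj : Disjoint (B.image Prod.fst) (B.image Prod.snd) := by
    rw [Finset.disjoint_left]
    rintro x hx hx'
    obtain ⟨p, hp, rfl⟩ := mem_image.1 hx
    obtain ⟨q, hq, hqx⟩ := mem_image.1 hx'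
    rcases eq_or_ne p q with rfl | hne
    · exact (ne_of_lt (hB.1 p hp)) hqx.symm
    · exact (hB.2 p hp q hq hne).2.1 hqx.symm
  rw [Vset, Finset.card_union_of_disjoint hdisj, h1, h2]
  omega

private lemma cross_mono {k n : ℕ} {A A' : Finset (Fin n × Fin n)} (h : A ⊆ A') :
    HasKCrossing k n A → HasKCrossing k n A' := by
  rintro ⟨f, hf, h1, h2, h3⟩
  exact ⟨f, fun i => h (hf i), h1, h2, h3⟩

private lemma cross_map {k m n : ℕ} {φ : Fin m → Fin n} (hφ : StrictMono φ)
    {A : Finset (Fin m × Fin m)} (h : HasKCrossing k m A) :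
    HasKCrossing k n (A.image (Prod.map φ φ)) := by
  obtain ⟨f, hf, h1, h2, h3⟩ := h
  exact ⟨fun i => Prod.map φ φ (f i), fun i => mem_image_of_mem _ (hf i),
    fun a b hab => hφ (h1 hab), fun a b hab => hφ (h2 hab), fun i j => hφ (h3 i j)⟩

private lemma cross_unmap {k m n : ℕ} (hk : 2 ≤ k) {B : Finset (Fin n × Fin n)}
    (hB : ∀ p ∈ B, (p.2 : ℕ) = (p.1 : ℕ) + 1) {φ : Fin m → Fin n} (hφ : StrictMono φ)
    {A : Finset (Fin m × Fin m)}
    (h : HasKCrossing k n (B ∪ A.image (Prod.map φ φ))) : HasKCrossing k m A := by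
  obtain ⟨f, hf, h1, h2, h3⟩ := h
  have hnb : ∀ i, f i ∈ A.image (Prod.map φ φ) := by
    intro i
    rcases Finset.mem_union.1 (hf i) with hi | hi
    · exfalso
      have hone := hB _ hi
      set i0 : Fin k := ⟨0, by omega⟩
      set i1 : Fin k := ⟨1, by omega⟩
      have hne : (if i = i0 then i1 else i0) ≠ i := by
        split
        · rename_i hii; rw [hii]; intro hc; simp [i0, i1, Fin.ext_iff] at hc
        · rename_i hii; exact fun hc => hii hc.symm
      set j := if i = i0 then i1 else i0 with hj
      rcases lt_or_gt_of_ne hne with hlt | hlt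
      · -- j < i
        have a1 : (f j).2 < (f i).2 := h2 hlt
        have a2 : (f i).1 < (f j).2 := h3 i j
        rw [Fin.lt_def] at a1 a2
        omega
      · -- i < j
        have a1 : (f i).1 < (f j).1 := h1 hlt
        have a2 : (f j).1 < (f i).2 := h3 j i
        rw [Fin.lt_def] at a1 a2
        omega
    · exact hi
  have hchoice : ∀ i, ∃ q, q ∈ A ∧ Prod.map φ φ q = f i := by
    intro i
    obtain ⟨q, hq, hq2⟩ := mem_image.1 (hnb i)
    exact ⟨q, hq, hq2⟩
  choose g hg1 hg2 using hchoice
  have hfst : ∀ i, φ (g i).1 = (f i).1 := fun i => congrArg Prod.fst (hg2 i)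
  have hsnd : ∀ i, φ (g i).2 = (f i).2 := fun i => congrArg Prod.snd (hg2 i)
  refine ⟨g, hg1, ?_, ?_, ?_⟩
  · intro a b hab
    have h : (f a).1 < (f b).1 := h1 hab
    rw [← hfst a, ← hfst b] at h
    exact hφ.lt_iff_lt.1 h
  · intro a b hab
    have h : (f a).2 < (f b).2 := h2 hab
    rw [← hsnd a, ← hsnd b] at h
    exact hφ.lt_iff_lt.1 h
  · intro i j
    have h : (f i).1 < (f j).2 := h3 i j
    rw [← hfst i, ← hsnd j] at h
    exact hφ.lt_iff_lt.1 h

private lemma matching_subset {n : ℕ} {A B : Finset (Fin n × Fin n)} (hBA : B ⊆ A)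
    (hA : IsMatchingArcs n A) : IsMatchingArcs n B :=
  ⟨fun p hp => hA.1 p (hBA hp), fun p hp q hq h => hA.2 p (hBA hp) q (hBA hq) h⟩

private lemma arc_avoids {n : ℕ} {A B : Finset (Fin n × Fin n)} (hA : IsMatchingArcs n A)
    (hBA : B ⊆ A) {p : Fin n × Fin n} (hp : p ∈ A \ B) :
    p.1 ∉ Vset n B ∧ p.2 ∉ Vset n B := by
  obtain ⟨hpA, hpB⟩ := Finset.mem_sdiff.1 hp
  constructor
  · intro h
    obtain ⟨q, hqB, hq⟩ := mem_Vset.1 h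
    have hne : p ≠ q := fun e => hpB (e ▸ hqB)
    have H := hA.2 p hpA q (hBA hqB) hne
    rcases hq with h' | h'
    · exact H.1 h'.symm
    · exact H.2.1 h'.symm
  · intro h
    obtain ⟨q, hqB, hq⟩ := mem_Vset.1 h
    have hne : p ≠ q := fun e => hpB (e ▸ hqB)
    have H := hA.2 p hpA q (hBA hqB) hne
    rcases hq with h' | h'
    · exact H.2.2.1 h'.symm
    · exact H.2.2.2 h'.symm

private lemma card_superset {k n : ℕ} (hk : 2 ≤ k) {B : Finset (Fin n × Fin n)}
    (hBm : IsMatchingArcs n B) (hB1 : ∀ p ∈ B, (p.2 : ℕ) = (p.1 : ℕ) + 1) :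
    ((univ : Finset (Finset (Fin n × Fin n))).filter
        (fun A => IsKNCDigraph k n A ∧ B ⊆ A)).card =
      ((univ : Finset (Finset (Fin (n - 2 * B.card) × Fin (n - 2 * B.card)))).filter
        (fun A => IsKNCDigraph k (n - 2 * B.card) A)).card := by
  set m := n - 2 * B.card with hm
  have hVc : ((Vset n B)ᶜ).card = m := by
    rw [card_compl, Vset_card hBm, Fintype.card_fin]
  set e := ((Vset n B)ᶜ).orderIsoOfFin hVc with he
  set φ : Fin m → Fin n := fun i => (e i : Fin n) with hφdef
  have hφ : StrictMono φ := by
    intro a b hab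
    have := e.strictMono hab
    exact_mod_cast this
  have hφinj : Function.Injective φ := hφ.injective
  have hrange : ∀ x : Fin n, x ∈ Set.range φ ↔ x ∈ (Vset n B)ᶜ := by
    intro x
    constructor
    · rintro ⟨i, rfl⟩; exact (e i).2
    · intro hx; exact ⟨e.symm ⟨x, hx⟩, by simp [hφdef]⟩
  have hPinj : Function.Injective (Prod.map φ φ) := Function.Injective.prodMap hφinj hφinj
  have himgV : ∀ (A' : Finset (Fin m × Fin m)), ∀ p ∈ A'.image (Prod.map φ φ),
      p.1 ∉ Vset n B ∧ p.2 ∉ Vset n B := by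
    intro A' p hp
    obtain ⟨q, _, rfl⟩ := mem_image.1 hp
    exact ⟨mem_compl.1 ((hrange _).1 ⟨q.1, rfl⟩), mem_compl.1 ((hrange _).1 ⟨q.2, rfl⟩)⟩
  refine Finset.card_bij'
    (fun A _ => (A \ B).preimage (Prod.map φ φ) hPinj.injOn)
    (fun A' _ => B ∪ A'.image (Prod.map φ φ)) ?_ ?_ ?_ ?_
  · -- forward maps into target
    intro A hA
    rw [mem_filter] at hA ⊢
    obtain ⟨-, ⟨⟨hm1, hm2⟩, hcross⟩, hBA⟩ := hA
    refine ⟨mem_univ _, ⟨?_, ?_⟩, ?_⟩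
    · intro p hp
      rw [Finset.mem_preimage] at hp
      have h := hm1 _ (Finset.mem_sdiff.1 hp).1
      exact hφ.lt_iff_lt.1 h
    · intro p hp q hq hne
      rw [Finset.mem_preimage] at hp hq
      have hne' : Prod.map φ φ p ≠ Prod.map φ φ q := fun h => hne (hPinj h)
      have H := hm2 _ (Finset.mem_sdiff.1 hp).1 _ (Finset.mem_sdiff.1 hq).1 hne'
      exact ⟨fun h => H.1 (congrArg φ h), fun h => H.2.1 (congrArg φ h),
        fun h => H.2.2.1 (congrArg φ h), fun h => H.2.2.2 (congrArg φ h)⟩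
    · intro hc
      apply hcross
      refine cross_mono ?_ (cross_map hφ hc)
      intro p hp
      rw [Finset.image_preimage] at hp
      exact sdiff_subset (filter_subset _ _ hp)
  · -- backward maps into source
    intro A' hA'
    rw [mem_filter] at hA' ⊢
    obtain ⟨-, ⟨hm1', hm2'⟩, hcross'⟩ := hA'
    refine ⟨mem_univ _, ⟨⟨?_, ?_⟩, ?_⟩, subset_union_left⟩
    · intro p hp
      rcases mem_union.1 hp with h | h
      · have := hB1 _ h
        rw [Fin.lt_def]; omega
      · obtain ⟨q, hq, rfl⟩ := mem_image.1 h
        exact hφ (hm1' _ hq)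
    · intro p hp q hq hne
      rcases mem_union.1 hp with h1 | h1 <;> rcases mem_union.1 hq with h2 | h2
      · exact hBm.2 p h1 q h2 hne
      · have hqv := himgV A' q h2
        have hp1 : p.1 ∈ Vset n B := mem_Vset.2 ⟨p, h1, Or.inl rfl⟩
        have hp2 : p.2 ∈ Vset n B := mem_Vset.2 ⟨p, h1, Or.inr rfl⟩
        exact ⟨fun h => hqv.1 (h ▸ hp1), fun h => hqv.2 (h ▸ hp1),
          fun h => hqv.1 (h ▸ hp2), fun h => hqv.2 (h ▸ hp2)⟩
      · have hpv := himgV A' p h1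
        have hq1 : q.1 ∈ Vset n B := mem_Vset.2 ⟨q, h2, Or.inl rfl⟩
        have hq2 : q.2 ∈ Vset n B := mem_Vset.2 ⟨q, h2, Or.inr rfl⟩
        exact ⟨fun h => hpv.1 (h ▸ hq1), fun h => hpv.1 (h ▸ hq2),
          fun h => hpv.2 (h ▸ hq1), fun h => hpv.2 (h ▸ hq2)⟩
      · obtain ⟨p', hp', rfl⟩ := mem_image.1 h1
        obtain ⟨q', hq', rfl⟩ := mem_image.1 h2
        have hne' : p' ≠ q' := fun h => hne (congrArg _ h)
        have H := hm2' _ hp' _ hq' hne'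
        exact ⟨fun h => H.1 (hφinj h), fun h => H.2.1 (hφinj h),
          fun h => H.2.2.1 (hφinj h), fun h => H.2.2.2 (hφinj h)⟩
    · intro hc
      exact hcross' (cross_unmap hk hB1 hφ hc)
  · -- left inverse
    intro A hA
    rw [mem_filter] at hA
    obtain ⟨-, ⟨hmatch, -⟩, hBA⟩ := hA
    have himg : Finset.image (Prod.map φ φ) ((A \ B).preimage (Prod.map φ φ) hPinj.injOn)
        = A \ B := by
      rw [Finset.image_preimage]
      apply Finset.filter_eq_self.2
      intro p hp
      have hav := arc_avoids hmatch hBA hp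
      rw [Set.range_prodMap]
      exact ⟨(hrange _).2 (mem_compl.2 hav.1), (hrange _).2 (mem_compl.2 hav.2)⟩
    show B ∪ Finset.image (Prod.map φ φ) ((A \ B).preimage (Prod.map φ φ) hPinj.injOn) = A
    rw [himg, union_sdiff_of_subset hBA]
  · -- right inverse
    intro A' hA'
    ext q
    rw [Finset.mem_preimage, Finset.mem_sdiff, Finset.mem_union]
    constructor
    · rintro ⟨hin | hin, hnB⟩
      · exact absurd hin hnB
      · obtain ⟨q', hq', hEq⟩ := mem_image.1 hin
        rwa [← hPinj hEq]
    · intro hq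
      refine ⟨Or.inr (mem_image_of_mem _ hq), ?_⟩
      intro hqB
      have hin : (Prod.map φ φ q).1 ∈ Vset n B := mem_Vset.2 ⟨_, hqB, Or.inl rfl⟩
      exact (mem_compl.1 ((hrange _).1 ⟨q.1, rfl⟩)) hin

private lemma sparse_zero (m : ℕ) :
    (((range m).powerset).filter (fun S => S.card = 0 ∧ ∀ i ∈ S, i+1 ∉ S)).card = 1 := by
  have h : (((range m).powerset).filter (fun S => S.card = 0 ∧ ∀ i ∈ S, i+1 ∉ S)) = {∅} := by
    ext S
    simp only [mem_filter, mem_powerset, mem_singleton, Finset.card_eq_zero]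
    constructor
    · rintro ⟨-, h, -⟩; exact h
    · rintro rfl
      exact ⟨empty_subset _, rfl, fun i hi => absurd hi (notMem_empty i)⟩
  rw [h, card_singleton]

private lemma sparse_count (m : ℕ) : ∀ b : ℕ,
    (((range m).powerset).filter (fun S => S.card = b ∧ ∀ i ∈ S, i+1 ∉ S)).card
      = Nat.choose (m + 1 - b) b := by
  induction m using Nat.strong_induction_on with
  | _ m ih =>
    match m with
    | 0 =>
      intro b
      cases b with
      | zero => simpa using sparse_zero 0
      | succ b =>
        rw [show 0 + 1 - (b+1) = 0 from by omega, Nat.choose_eq_zero_of_lt (by omega),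
          Finset.card_eq_zero, Finset.filter_eq_empty_iff]
        intro S hS
        rw [mem_powerset, range_zero, subset_empty] at hS
        subst hS
        simp
    | 1 =>
      intro b
      match b with
      | 0 => simpa using sparse_zero 1
      | 1 =>
        have h1 : (((range 1).powerset).filter (fun S => S.card = 1 ∧ ∀ i ∈ S, i+1 ∉ S))
            = {({0} : Finset ℕ)} := by
          ext S
          simp only [mem_filter, mem_powerset, Finset.range_one, Finset.subset_singleton_iff,
            mem_singleton]
          constructor
          · rintro ⟨(rfl | rfl), hcard, -⟩
            · simp at hcard
            · rfl
          · rintro rfl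
            refine ⟨Or.inr rfl, card_singleton _, ?_⟩
            intro i hi
            rw [mem_singleton] at hi
            subst hi
            simp
        rw [h1, card_singleton]
        decide
      | (b+2) =>
        rw [show 1 + 1 - (b+2) = 0 from by omega, Nat.choose_eq_zero_of_lt (by omega),
          Finset.card_eq_zero, Finset.filter_eq_empty_iff]
        rintro S hS ⟨hcard, -⟩
        have hle := card_le_card (mem_powerset.1 hS)
        rw [card_range] at hle
        omega
    | (m+2) =>
      intro b
      cases b with
      | zero =>
        have := sparse_zero (m+2)
        simpa using this
      | succ b =>
        have hsplit := Finset.card_filter_add_card_filter_not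
          (s := ((range (m+2)).powerset).filter (fun S => S.card = b+1 ∧ ∀ i ∈ S, i+1 ∉ S))
          (p := fun S => m+1 ∈ S)
        have hpart1 : ((((range (m+2)).powerset).filter
              (fun S => S.card = b+1 ∧ ∀ i ∈ S, i+1 ∉ S)).filter (fun S => m+1 ∈ S)).card
            = (((range m).powerset).filter (fun S => S.card = b ∧ ∀ i ∈ S, i+1 ∉ S)).card := by
          refine Finset.card_bij' (fun S _ => S.erase (m+1)) (fun S _ => insert (m+1) S)
            ?_ ?_ ?_ ?_
          · intro S hS
            simp only [mem_filter, mem_powerset] at hS ⊢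
            obtain ⟨⟨hsub, hcard, hsp⟩, hmem⟩ := hS
            refine ⟨?_, ?_, ?_⟩
            · intro x hx
              rw [mem_erase] at hx
              have hx2 := hsub hx.2
              rw [mem_range] at hx2 ⊢
              have : x ≠ m := by
                rintro rfl
                exact hsp x hx.2 hmem
              omega
            · rw [card_erase_of_mem hmem, hcard]
              omega
            · intro i hi
              rw [mem_erase] at hi
              intro hc
              exact hsp i hi.2 (mem_erase.1 hc).2
          · intro S hS
            simp only [mem_filter, mem_powerset] at hS ⊢
            obtain ⟨hsub, hcard, hsp⟩ := hS
            have hnm : m+1 ∉ S := by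
              intro hc
              have := hsub hc
              rw [mem_range] at this
              omega
            refine ⟨⟨?_, ?_, ?_⟩, mem_insert_self _ _⟩
            · intro x hx
              rcases mem_insert.1 hx with rfl | hx
              · rw [mem_range]; omega
              · have := hsub hx
                rw [mem_range] at this ⊢
                omega
            · rw [card_insert_of_notMem hnm, hcard]
            · intro i hi
              rcases mem_insert.1 hi with rfl | hi
              · intro hc
                rcases mem_insert.1 hc with h | h
                · omega
                · have := hsub h
                  rw [mem_range] at this
                  omega
              · intro hc
                rcases mem_insert.1 hc with h | h
                · have := hsub hi
                  rw [mem_range] at this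
                  omega
                · exact hsp i hi h
          · intro S hS
            simp only [mem_filter] at hS
            exact insert_erase hS.2
          · intro S hS
            simp only [mem_filter, mem_powerset] at hS
            have hnm : m+1 ∉ S := by
              intro hc
              have := hS.1 hc
              rw [mem_range] at this
              omega
            exact erase_insert hnm
        have hpart2 : ((((range (m+2)).powerset).filter
              (fun S => S.card = b+1 ∧ ∀ i ∈ S, i+1 ∉ S)).filter (fun S => ¬ m+1 ∈ S))
            = (((range (m+1)).powerset).filter (fun S => S.card = b+1 ∧ ∀ i ∈ S, i+1 ∉ S)) := by
          ext S
          simp only [mem_filter, mem_powerset]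
          constructor
          · rintro ⟨⟨hsub, hrest⟩, hnm⟩
            refine ⟨?_, hrest⟩
            intro x hx
            have := hsub hx
            rw [mem_range] at this ⊢
            have : x ≠ m+1 := fun hc => hnm (hc ▸ hx)
            omega
          · rintro ⟨hsub, hrest⟩
            have hnm : m+1 ∉ S := by
              intro hc
              have := hsub hc
              rw [mem_range] at this
              omega
            refine ⟨⟨?_, hrest⟩, hnm⟩
            intro x hx
            have := hsub hx
            rw [mem_range] at this ⊢
            omega
        rw [hpart1, hpart2, ih (m+1) (by omega) (b+1), ih m (by omega) b] at hsplit
    -- hsplit : choose (m+1-b) b + choose (m+1+1-(b+1)) (b+1)... careful order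
        rw [← hsplit]
        by_cases hble : b ≤ m + 1
        · rw [show m + 1 + 1 - (b+1) = m + 1 - b from by omega,
            show m + 2 + 1 - (b+1) = (m + 1 - b) + 1 from by omega,
            Nat.choose_succ_succ]
        · have e1 : (m + 1 - b).choose b = 0 := Nat.choose_eq_zero_of_lt (by omega)
          have e2 : (m + 1 + 1 - (b+1)).choose (b+1) = 0 := Nat.choose_eq_zero_of_lt (by omega)
          have e3 : (m + 2 + 1 - (b+1)).choose (b+1) = 0 := Nat.choose_eq_zero_of_lt (by omega)
          omega

private def GoodB (n : ℕ) (B : Finset (Fin n × Fin n)) : Prop :=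
  IsMatchingArcs n B ∧ ∀ p ∈ B, (p.2 : ℕ) = (p.1 : ℕ) + 1

private lemma onearc_inj {n : ℕ} {p q : Fin n × Fin n}
    (hp : (p.2:ℕ) = (p.1:ℕ)+1) (hq : (q.2:ℕ) = (q.1:ℕ)+1) (h : (p.1:ℕ) = (q.1:ℕ)) :
    p = q := by
  have h1 : p.1 = q.1 := Fin.ext h
  have h2 : p.2 = q.2 := Fin.ext (by omega)
  exact Prod.ext h1 h2

private lemma jS_image {n : ℕ} {S : Finset ℕ} (hS : S ⊆ Finset.range (n-1)) :
    ((univ.filter (fun p : Fin n × Fin n => (p.1:ℕ) ∈ S ∧ (p.2:ℕ) = (p.1:ℕ)+1)).image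
      (fun p => (p.1 : ℕ))) = S := by
  ext i
  simp only [mem_image, mem_filter, mem_univ, true_and]
  constructor
  · rintro ⟨p, ⟨h1, -⟩, rfl⟩
    exact h1
  · intro hi
    have hin : i < n - 1 := mem_range.1 (hS hi)
    have hn1 : i < n := by omega
    have hn2 : i + 1 < n := by omega
    exact ⟨(⟨i, hn1⟩, ⟨i+1, hn2⟩), ⟨hi, rfl⟩, rfl⟩

private lemma good_count {n b : ℕ} (hb : 2 * b ≤ n) :
    ((univ : Finset (Finset (Fin n × Fin n))).filter (fun B => GoodB n B ∧ B.card = b)).card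
      = Nat.choose (n - b) b := by
  have key : ((univ : Finset (Finset (Fin n × Fin n))).filter
        (fun B => GoodB n B ∧ B.card = b)).card
      = (((range (n-1)).powerset).filter (fun S => S.card = b ∧ ∀ i ∈ S, i+1 ∉ S)).card := by
    refine Finset.card_bij' (fun B _ => B.image (fun p => (p.1:ℕ)))
      (fun S _ => univ.filter (fun p : Fin n × Fin n => (p.1:ℕ) ∈ S ∧ (p.2:ℕ) = (p.1:ℕ)+1))
      ?_ ?_ ?_ ?_
    · intro B hB
      obtain ⟨hGood, hcard⟩ := (mem_filter.1 hB).2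
      have hinjOn : Set.InjOn (fun p : Fin n × Fin n => (p.1:ℕ)) ↑B := by
        intro p hp q hq h
        exact onearc_inj (hGood.2 p hp) (hGood.2 q hq) h
      rw [mem_filter, mem_powerset]
      refine ⟨?_, ?_, ?_⟩
      · intro i hi
        obtain ⟨p, hp, rfl⟩ := mem_image.1 hi
        have h2 := hGood.2 p hp
        have := p.2.isLt
        rw [mem_range]
        omega
      · rw [Finset.card_image_of_injOn hinjOn, hcard]
      · intro i hi hi1
        obtain ⟨p, hp, hpi⟩ := mem_image.1 hi
        obtain ⟨q, hq, hqi⟩ := mem_image.1 hi1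
        have hpq : p ≠ q := by
          intro h
          subst h
          omega
        have hone := hGood.2 p hp
        apply (hGood.1.2 p hp q hq hpq).2.2.1
        exact Fin.ext (by omega)
    · intro S hS
      rw [mem_filter, mem_powerset] at hS
      obtain ⟨hsub, hScard, hsp⟩ := hS
      rw [mem_filter]
      have hmem : ∀ p ∈ univ.filter
          (fun p : Fin n × Fin n => (p.1:ℕ) ∈ S ∧ (p.2:ℕ) = (p.1:ℕ)+1),
          (p.1:ℕ) ∈ S ∧ (p.2:ℕ) = (p.1:ℕ)+1 := by
        intro p hp
        exact (mem_filter.1 hp).2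
      refine ⟨mem_univ _, ⟨⟨?_, ?_⟩, ?_⟩, ?_⟩
      · intro p hp
        have := (hmem p hp).2
        rw [Fin.lt_def]
        omega
      · intro p hp q hq hne
        obtain ⟨hpS, hpone⟩ := hmem p hp
        obtain ⟨hqS, hqone⟩ := hmem q hq
        have hval : (p.1:ℕ) ≠ (q.1:ℕ) := by
          intro h
          exact hne (onearc_inj hpone hqone h)
        refine ⟨fun h => hval (congrArg Fin.val h), ?_, ?_, ?_⟩
        · intro h
          have : (p.1:ℕ) = (q.1:ℕ) + 1 := by
            rw [h]; omega
          exact hsp _ hqS (this ▸ hpS)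
        · intro h
          have : (q.1:ℕ) = (p.1:ℕ) + 1 := by
            rw [← h]; omega
          exact hsp _ hpS (this ▸ hqS)
        · intro h
          apply hval
          have : (p.2:ℕ) = (q.2:ℕ) := congrArg Fin.val h
          omega
      · exact fun p hp => (hmem p hp).2
      · have himg := jS_image (n := n) hsub
        have hinjOn : Set.InjOn (fun p : Fin n × Fin n => (p.1:ℕ))
            ↑(univ.filter (fun p : Fin n × Fin n => (p.1:ℕ) ∈ S ∧ (p.2:ℕ) = (p.1:ℕ)+1)) := by
          intro p hp q hq h
          simp only [coe_filter, Set.mem_setOf_eq] at hp hq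
          exact onearc_inj hp.2.2 hq.2.2 h
        show #(univ.filter (fun p : Fin n × Fin n => (p.1:ℕ) ∈ S ∧ (p.2:ℕ) = (p.1:ℕ)+1)) = b
        rw [← hScard]
        conv_rhs => rw [← himg]
        rw [Finset.card_image_of_injOn hinjOn]
    · intro B hB
      obtain ⟨hGood, -⟩ := (mem_filter.1 hB).2
      ext p
      simp only [mem_filter, mem_univ, true_and, mem_image]
      constructor
      · rintro ⟨⟨q, hq, hqp⟩, hone⟩
        have := onearc_inj hone (hGood.2 q hq) hqp.symm
        rwa [this]
      · intro hp
        exact ⟨⟨p, hp, rfl⟩, hGood.2 p hp⟩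
    · intro S hS
      rw [mem_filter, mem_powerset] at hS
      exact jS_image hS.1
  rw [key, sparse_count]
  rcases Nat.eq_zero_or_pos n with rfl | hn
  · have hb0 : b = 0 := by omega
    subst hb0
    rfl
  · congr 1
    omega

private lemma goodB_card_le {n : ℕ} {B : Finset (Fin n × Fin n)} (hG : GoodB n B) :
    2 * B.card ≤ n := by
  have h := Vset_card hG.1
  have h2 := Finset.card_le_univ (Vset n B)
  rw [h, Fintype.card_fin] at h2
  exact h2

private lemma F_eq (k m : ℕ) :
    (((univ : Finset (Finset (Fin m × Fin m)))).filter (fun A => IsKNCDigraph k m A)).card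
      = ∑ l ∈ range (m+1), fNC k m l := by
  have hcard : ∀ A ∈ (univ : Finset (Finset (Fin m × Fin m))).filter
      (fun A => IsKNCDigraph k m A), (IsolatedSet m A).card ∈ range (m+1) := by
    intro A _
    rw [mem_range]
    have h := Finset.card_le_univ (IsolatedSet m A)
    rw [Fintype.card_fin] at h
    omega
  rw [Finset.card_eq_sum_card_fiberwise hcard]
  refine Finset.sum_congr rfl fun l _ => ?_
  rw [fNC, Nat.card_eq_fintype_card, Fintype.card_subtype, Finset.filter_filter]

/-- `S_k(n) = ∑_{b=0}^{⌊n/2⌋} (−1)^b C(n−b,b) ∑_{ℓ=0}^{n−2b} f_k(n−2b,ℓ)`. -/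
theorem stmt1 (k n : ℕ) (hk : 2 ≤ k) :
    (STot k n : ℤ) =
      ∑ b ∈ Finset.range (n / 2 + 1),
        (-1 : ℤ) ^ b * (Nat.choose (n - b) b : ℤ) *
          ∑ l ∈ Finset.range (n - 2 * b + 1), (fNC k (n - 2 * b) l : ℤ) := by
  classical
  have hSTot : (STot k n : ℤ)
      = ((((univ : Finset (Finset (Fin n × Fin n)))).filter
          (fun A => IsRNAStructure k n A)).card : ℤ) := by
    rw [STot, Nat.card_eq_fintype_card, Fintype.card_subtype]
  rw [hSTot]
  have h1 : (univ : Finset (Finset (Fin n × Fin n))).filter (fun A => IsRNAStructure k n A)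
      = ((univ : Finset (Finset (Fin n × Fin n))).filter (fun A => IsKNCDigraph k n A)).filter
          (fun A => A.filter (fun p => (p.2:ℕ) = (p.1:ℕ)+1) = ∅) := by
    rw [Finset.filter_filter]
    apply Finset.filter_congr
    intro A _
    show IsRNAStructure k n A ↔ _
    unfold IsRNAStructure
    constructor
    · rintro ⟨h, h2⟩
      refine ⟨h, ?_⟩
      rw [← Finset.not_nonempty_iff_eq_empty]
      rintro ⟨p, hp⟩
      rw [mem_filter] at hp
      exact h2 ⟨p, hp.1, hp.2⟩
    · rintro ⟨h, h2⟩
      refine ⟨h, ?_⟩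
      rintro ⟨p, hp, hone⟩
      have hmem : p ∈ A.filter (fun p => (p.2:ℕ)=(p.1:ℕ)+1) := mem_filter.2 ⟨hp, hone⟩
      rw [h2] at hmem
      exact absurd hmem (notMem_empty p)
  rw [h1, ← Finset.sum_boole]
  have h2 : ∀ A ∈ (univ : Finset (Finset (Fin n × Fin n))).filter
      (fun A => IsKNCDigraph k n A),
      (if A.filter (fun p => (p.2:ℕ)=(p.1:ℕ)+1) = ∅ then (1:ℤ) else 0)
      = ∑ B ∈ (univ : Finset (Finset (Fin n × Fin n))),
          if B ⊆ A.filter (fun p => (p.2:ℕ)=(p.1:ℕ)+1) then (-1:ℤ)^B.card else 0 := by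
    intro A _
    rw [← Finset.sum_filter]
    have hps : (univ : Finset (Finset (Fin n × Fin n))).filter
        (fun B => B ⊆ A.filter (fun p => (p.2:ℕ)=(p.1:ℕ)+1))
        = (A.filter (fun p => (p.2:ℕ)=(p.1:ℕ)+1)).powerset := by
      ext B
      simp [mem_powerset]
    rw [hps]
    exact (Finset.sum_powerset_neg_one_pow_card).symm
  rw [Finset.sum_congr rfl h2, Finset.sum_comm]
  have h3 : ∀ B ∈ (univ : Finset (Finset (Fin n × Fin n))),
      (∑ A ∈ (univ : Finset (Finset (Fin n × Fin n))).filter (fun A => IsKNCDigraph k n A),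
        if B ⊆ A.filter (fun p => (p.2:ℕ)=(p.1:ℕ)+1) then (-1:ℤ)^B.card else 0)
      = (-1:ℤ)^B.card * ((((univ : Finset (Finset (Fin n × Fin n))).filter
          (fun A => IsKNCDigraph k n A)).filter
          (fun A => B ⊆ A.filter (fun p => (p.2:ℕ)=(p.1:ℕ)+1))).card : ℤ) := by
    intro B _
    rw [← Finset.sum_filter, Finset.sum_const, nsmul_eq_mul, mul_comm]
  rw [Finset.sum_congr rfl h3]
  rw [← Finset.sum_filter_of_ne (p := fun B => GoodB n B) ?good]
  case good =>
    intro B _ hne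
    have hcard : (((univ : Finset (Finset (Fin n × Fin n))).filter
        (fun A => IsKNCDigraph k n A)).filter
        (fun A => B ⊆ A.filter (fun p => (p.2:ℕ)=(p.1:ℕ)+1))).card ≠ 0 := by
      intro hc
      rw [hc] at hne
      simp at hne
    obtain ⟨A, hA⟩ := Finset.card_ne_zero.1 hcard |>.exists_mem
    rw [mem_filter, mem_filter] at hA
    obtain ⟨⟨-, hKNC⟩, hsub⟩ := hA
    have hBA : B ⊆ A := hsub.trans (filter_subset _ _)
    exact ⟨matching_subset hBA hKNC.1, fun p hp => (mem_filter.1 (hsub hp)).2⟩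
  rw [← Finset.sum_fiberwise_of_maps_to (g := Finset.card) (t := range (n/2+1)) ?maps]
  case maps =>
    intro B hB
    have hG := (mem_filter.1 hB).2
    have := goodB_card_le hG
    rw [mem_range]
    omega
  refine Finset.sum_congr rfl fun b hb => ?_
  have hb2 : 2 * b ≤ n := by
    have := mem_range.1 hb
    omega
  have hterm : ∀ B ∈ ((univ : Finset (Finset (Fin n × Fin n))).filter
      (fun B => GoodB n B)).filter (fun B => B.card = b),
      (-1:ℤ)^B.card * ((((univ : Finset (Finset (Fin n × Fin n))).filter
          (fun A => IsKNCDigraph k n A)).filter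
          (fun A => B ⊆ A.filter (fun p => (p.2:ℕ)=(p.1:ℕ)+1))).card : ℤ)
      = (-1:ℤ)^b * ((∑ l ∈ range (n - 2*b + 1), fNC k (n-2*b) l : ℕ) : ℤ) := by
    intro B hB
    rw [mem_filter, mem_filter] at hB
    obtain ⟨⟨-, hGood⟩, hcard⟩ := hB
    have e1 : ((univ : Finset (Finset (Fin n × Fin n))).filter
          (fun A => IsKNCDigraph k n A)).filter
          (fun A => B ⊆ A.filter (fun p => (p.2:ℕ)=(p.1:ℕ)+1))
        = (univ : Finset (Finset (Fin n × Fin n))).filter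
          (fun A => IsKNCDigraph k n A ∧ B ⊆ A) := by
      rw [Finset.filter_filter]
      apply Finset.filter_congr
      intro A _
      constructor
      · rintro ⟨hKNC, hsub⟩
        exact ⟨hKNC, hsub.trans (filter_subset _ _)⟩
      · rintro ⟨hKNC, hsub⟩
        refine ⟨hKNC, ?_⟩
        intro p hp
        exact mem_filter.2 ⟨hsub hp, hGood.2 p hp⟩
    rw [e1, card_superset hk hGood.1 hGood.2, hcard, F_eq]
  rw [Finset.sum_congr rfl hterm, Finset.sum_const]
  rw [Finset.filter_filter, good_count hb2, nsmul_eq_mul]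
  push_cast
  ring
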